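/- Let K be a field of characteristic 0 and let L = θ⁴ + a₃θ³ + a₂θ² + a₁θ + a₀ ∈ K(t)[θ]. Define b₄ = (5/2)a₃, b₃ = 2a₂ + 2θ(a₃) + (7/4)a₃², b₂ = −a₁ + 4θ(a₂) + (7/2)a₂a₃. Then the self-adjointness relation a₁ = θ(a₂) + (1/2)a₂a₃ − (1/2)θ²(a₃) − (3/4)a₃θ(a₃) − (1/8)a₃³ on L implies the relation 2(βb₂) − 3θ(βb₃) + 4θ²(βb₄) − 5θ³(β) = 0, where β is any nonzero solution of 5·θβ = 2b₄β (equivalently 2θβ = a₃β). -/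
import Mathlib


/-- One direction of the order 4 / order 5 correspondence: self-adjointness of the
fourth-order operator implies the first self-adjointness relation (orth) for its
second exterior power, where `5θβ = 2b₄β` (equivalently `2θβ = a₃β`) and `β ≠ 0`. -/
theorem exterior_square_orth {K A : Type*} [Field K] [CharZero K]
    [Field A] [CharZero A] [Algebra K A] (D : Derivation K A A)
    (a0 a1 a2 a3 : A) (b4 b3 b2 : A)
    (hb4 : b4 = ((5 : A)/2) * a3)
    (hb3 : b3 = 2 * a2 + 2 * D a3 + ((7 : A)/4) * a3 ^ 2)
    (hb2 : b2 = -a1 + 4 * D a2 + ((7 : A)/2) * (a2 * a3))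
    (β : A) (hβ0 : β ≠ 0) (hβ : 5 * D β = 2 * b4 * β)
    (hsa : a1 = D a2 + ((1 : A)/2) * (a2 * a3) - ((1 : A)/2) * D (D a3)
      - ((3 : A)/4) * (a3 * D a3) - ((1 : A)/8) * a3 ^ 3) :
    2 * (β * b2) - 3 * D (β * b3) + 4 * D (D (β * b4)) - 5 * D (D (D β)) = 0 := by
  have hnat : ∀ n : ℕ, D ((n : ℕ) : A) = 0 := D.map_natCast
  have h2 : D (2 : A) = 0 := by exact_mod_cast hnat 2
  have h3 : D (3 : A) = 0 := by exact_mod_cast hnat 3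
  have h4 : D (4 : A) = 0 := by exact_mod_cast hnat 4
  have h5 : D (5 : A) = 0 := by exact_mod_cast hnat 5
  have h7 : D (7 : A) = 0 := by exact_mod_cast hnat 7
  have h8 : D (8 : A) = 0 := by exact_mod_cast hnat 8
  have h1' : D (1 : A) = 0 := D.map_one_eq_zero
  have hc : ∀ n m : A, D n = 0 → D m = 0 → D (n / m) = 0 := by
    intro n m hn hm
    rw [Derivation.leibniz_div, hn, hm, smul_zero, zero_sub, smul_zero, neg_zero, smul_zero]
  have hDβ : D β = a3 * β := by
    have : (5 : A) * D β = 5 * (a3 * β) := by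
      rw [hβ, hb4]; ring
    have h5ne : (5 : A) ≠ 0 := by norm_num
    exact mul_left_cancel₀ h5ne this
  subst hb4 hb3 hb2 hsa
  simp only [map_add, map_sub, map_neg, Derivation.leibniz, Derivation.leibniz_pow,
    h2, h3, h4, h5, h7, h8, h1',
    hc _ _ h5 h2, hc _ _ h7 h4, hc _ _ h7 h2, hc _ _ h1' h2, hc _ _ h3 h4, hc _ _ h1' h8,
    hDβ, smul_eq_mul, mul_zero, zero_mul, add_zero, zero_add, sub_zero, nsmul_eq_mul,
    Nat.cast_ofNat]
  ring
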